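/- For every node u ∈ V_A ∪ C_B and every node v ∈ V_B \ C_B, the weighted distance in G satisfies wdist_G(u, v) = min over x ∈ C_B of ( wdist_{G'_A}(u, x) + wdist_{G_B}(x, v) ), where the minimum over an empty set is ∞. -/

import Mathlib

open scoped ENNReal

/-- The weighted distance in the graph `H` with (extended-natural-valued)
weight function `w`: the infimum over all walks from `u` to `v` of the total
weight of the walk (the sum of the weights of its edges, counted with
multiplicity); it is `∞` when no walk exists. -/
noncomputable def wdist {V : Type*} (H : SimpleGraph V) (w : V → V → ℕ∞) (u v : V) : ℕ∞ :=
  ⨅ p : H.Walk u v, (p.darts.map (fun d => w d.fst d.snd)).sum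

/-- The subgraph of `G` induced on the vertex set `S` (kept on the same vertex
type: edges of `G` with both endpoints in `S`). -/
def inducedOn {V : Type*} (G : SimpleGraph V) (S : Set V) : SimpleGraph V :=
  SimpleGraph.fromRel (fun u v => G.Adj u v ∧ u ∈ S ∧ v ∈ S)

/-- `C_B`: the set of nodes of `V_B` incident to a cut edge (an edge of `G` with
one endpoint in `V_A` and the other in `V_B`). -/
def cutB {V : Type*} (G : SimpleGraph V) (VA VB : Set V) : Set V :=
  {v | v ∈ VB ∧ ∃ u ∈ VA, G.Adj u v}

/-- The virtual graph `G'_A`: its vertices are `V_A ∪ C_B`, with the edges of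
`G_A`, the cut edges, and an edge between every two distinct nodes of `C_B`. -/
def virtualA {V : Type*} (G : SimpleGraph V) (VA VB : Set V) : SimpleGraph V :=
  SimpleGraph.fromRel (fun u v =>
    (G.Adj u v ∧ u ∈ VA ∧ v ∈ VA) ∨
    (G.Adj u v ∧ u ∈ VA ∧ v ∈ cutB G VA VB) ∨
    (u ∈ cutB G VA VB ∧ v ∈ cutB G VA VB))

open Classical in
/-- The weight function `w'` of the virtual graph `G'_A`: the weight of an edge
between two nodes of `C_B` is the weighted distance between them in `G_B`, and
every other edge keeps its weight from `G`. -/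
noncomputable def virtualWeight {V : Type*} (G : SimpleGraph V) (w : V → V → ℕ)
    (VA VB : Set V) (u v : V) : ℕ∞ :=
  if u ∈ cutB G VA VB ∧ v ∈ cutB G VA VB then
    wdist (inducedOn G VB) (fun a b => (w a b : ℕ∞)) u v
  else (w u v : ℕ∞)



namespace WdistAux

variable {V : Type*}

noncomputable def wlen {H : SimpleGraph V} (w : V → V → ℕ∞) {u v : V} (p : H.Walk u v) : ℕ∞ :=
  (p.darts.map (fun d => w d.fst d.snd)).sum

@[simp] lemma wlen_nil {H : SimpleGraph V} (w : V → V → ℕ∞) (u : V) :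
    wlen w (SimpleGraph.Walk.nil : H.Walk u u) = 0 := rfl

@[simp] lemma wlen_cons {H : SimpleGraph V} (w : V → V → ℕ∞) {u y v : V} (h : H.Adj u y)
    (q : H.Walk y v) : wlen w (SimpleGraph.Walk.cons h q) = w u y + wlen w q := by
  simp [wlen]

lemma wlen_append {H : SimpleGraph V} (w : V → V → ℕ∞) {u x v : V} (p : H.Walk u x)
    (q : H.Walk x v) : wlen w (p.append q) = wlen w p + wlen w q := by
  simp [wlen, SimpleGraph.Walk.darts_append]

lemma wdist_le {H : SimpleGraph V} (w : V → V → ℕ∞) {u v : V} (p : H.Walk u v) :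
    wdist H w u v ≤ wlen w p := iInf_le _ p

@[simp] lemma wdist_self (H : SimpleGraph V) (w : V → V → ℕ∞) (u : V) :
    wdist H w u u = 0 :=
  le_antisymm (by simpa using wdist_le w (SimpleGraph.Walk.nil : H.Walk u u)) (zero_le)

lemma enat_exists_eq_iInf {ι : Sort*} [Nonempty ι] (f : ι → ℕ∞) : ∃ i, f i = ⨅ j, f j := by
  by_cases h : (⨅ j, f j) = ⊤
  · exact ⟨Classical.arbitrary ι, by simp [h, iInf_eq_top.mp h]⟩
  · have h1 : (⨅ j, f j) < (⨅ j, f j) + 1 := (ENat.lt_add_one_iff h).2 le_rfl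
    obtain ⟨i, hi⟩ := iInf_lt_iff.mp h1
    exact ⟨i, le_antisymm ((ENat.lt_add_one_iff h).1 hi) (iInf_le _ i)⟩

lemma le_iInf_add_iInf {ι κ : Sort*} {f : ι → ℕ∞} {g : κ → ℕ∞} {X : ℕ∞}
    (h : ∀ i j, X ≤ f i + g j) : X ≤ (⨅ i, f i) + ⨅ j, g j := by
  rcases isEmpty_or_nonempty ι with hι | hι
  · simp [iInf_of_isEmpty]
  rcases isEmpty_or_nonempty κ with hκ | hκ
  · simp [iInf_of_isEmpty]
  obtain ⟨i, hi⟩ := enat_exists_eq_iInf f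
  obtain ⟨j, hj⟩ := enat_exists_eq_iInf g
  rw [← hi, ← hj]; exact h i j

lemma wdist_le_add_left {H : SimpleGraph V} (w : V → V → ℕ∞) {u y v : V} (h : H.Adj u y) :
    wdist H w u v ≤ w u y + wdist H w y v := by
  have h2 : ∀ (_ : Unit) (q : H.Walk y v), wdist H w u v ≤ w u y + wlen w q := by
    intro _ q
    simpa using wdist_le w (SimpleGraph.Walk.cons h q)
  simpa [iInf_const, wdist, wlen] using
    le_iInf_add_iInf (f := fun _ : Unit => w u y) (g := fun q : H.Walk y v => wlen w q) h2

lemma wdist_le_weight {H : SimpleGraph V} {w : V → V → ℕ∞} {u v : V} (h : H.Adj u v) :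
    wdist H w u v ≤ w u v := by
  simpa using wdist_le w (SimpleGraph.Walk.cons h SimpleGraph.Walk.nil)

lemma wdist_triangle {H : SimpleGraph V} (w : V → V → ℕ∞) (u x v : V) :
    wdist H w u v ≤ wdist H w u x + wdist H w x v := by
  apply le_iInf_add_iInf
  intro p q
  simpa [wlen_append, wlen] using wdist_le w (p.append q)

lemma wdist_le_wdist_of_edge_bound {H K : SimpleGraph V} {w w' : V → V → ℕ∞}
    (h : ∀ a b, K.Adj a b → wdist H w a b ≤ w' a b) (u v : V) :
    wdist H w u v ≤ wdist K w' u v := by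
  refine le_iInf fun p => ?_
  induction p with
  | nil => simp
  | cons hadj q ih =>
    calc wdist H w _ _ ≤ wdist H w _ _ + wdist H w _ _ := wdist_triangle _ _ _ _
    _ ≤ w' _ _ + wlen w' q := add_le_add (h _ _ hadj) ih
    _ = wlen w' (SimpleGraph.Walk.cons hadj q) := (wlen_cons w' hadj q).symm

lemma wdist_anti {H K : SimpleGraph V} (hHK : H ≤ K) (w : V → V → ℕ∞) (u v : V) :
    wdist K w u v ≤ wdist H w u v :=
  wdist_le_wdist_of_edge_bound (fun _ _ hab => wdist_le_weight (hHK hab)) u v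

end WdistAux

namespace WdistAux

variable {V : Type*}

lemma cutB_subset (G : SimpleGraph V) (VA VB : Set V) : cutB G VA VB ⊆ VB :=
  fun _ h => h.1

lemma inducedOn_le (G : SimpleGraph V) (S : Set V) : inducedOn G S ≤ G := by
  intro a b hab
  rw [inducedOn, SimpleGraph.fromRel_adj] at hab
  rcases hab.2 with ⟨h, _⟩ | ⟨h, _⟩
  exacts [h, h.symm]

lemma adj_inducedOn {G : SimpleGraph V} {S : Set V} {a b : V}
    (h : G.Adj a b) (ha : a ∈ S) (hb : b ∈ S) : (inducedOn G S).Adj a b :=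
  (SimpleGraph.fromRel_adj _ _ _).2 ⟨h.ne, Or.inl ⟨h, ha, hb⟩⟩

lemma adj_virtualA {G : SimpleGraph V} {VA VB : Set V} {a b : V}
    (h : (G.Adj a b ∧ a ∈ VA ∧ b ∈ VA) ∨ (G.Adj a b ∧ a ∈ VA ∧ b ∈ cutB G VA VB) ∨
         (a ∈ cutB G VA VB ∧ b ∈ cutB G VA VB)) (hne : a ≠ b) :
    (virtualA G VA VB).Adj a b :=
  (SimpleGraph.fromRel_adj _ _ _).2 ⟨hne, Or.inl h⟩

lemma virtualWeight_of_not {G : SimpleGraph V} {w : V → V → ℕ} {VA VB : Set V} {a b : V}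
    (h : ¬(a ∈ cutB G VA VB ∧ b ∈ cutB G VA VB)) :
    virtualWeight G w VA VB a b = (w a b : ℕ∞) := by
  unfold virtualWeight; rw [if_neg h]

lemma virtualWeight_of_mem {G : SimpleGraph V} {w : V → V → ℕ} {VA VB : Set V} {a b : V}
    (h : a ∈ cutB G VA VB ∧ b ∈ cutB G VA VB) :
    virtualWeight G w VA VB a b = wdist (inducedOn G VB) (fun a b => (w a b : ℕ∞)) a b := by
  unfold virtualWeight; rw [if_pos h]

/-- shorthand: distance in the virtual graph -/
noncomputable def dv (G : SimpleGraph V) (w : V → V → ℕ) (VA VB : Set V) (a b : V) : ℕ∞ :=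
  wdist (virtualA G VA VB) (virtualWeight G w VA VB) a b

/-- shorthand: distance in `G_B` -/
noncomputable def dB (G : SimpleGraph V) (w : V → V → ℕ) (VB : Set V) (a b : V) : ℕ∞ :=
  wdist (inducedOn G VB) (fun a b => (w a b : ℕ∞)) a b

lemma dv_le_dB {G : SimpleGraph V} {w : V → V → ℕ} {VA VB : Set V} {a b : V}
    (ha : a ∈ cutB G VA VB) (hb : b ∈ cutB G VA VB) :
    dv G w VA VB a b ≤ dB G w VB a b := by
  rcases eq_or_ne a b with rfl | hne
  · simp [dv]
  · have hadj := adj_virtualA (Or.inr (Or.inr ⟨ha, hb⟩)) hne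
    have h2 := wdist_le_weight (w := virtualWeight G w VA VB) hadj
    rwa [virtualWeight_of_mem ⟨ha, hb⟩] at h2

lemma wdist_le_virtualWeight {G : SimpleGraph V} {w : V → V → ℕ} {VA VB : Set V} :
    ∀ a b, (virtualA G VA VB).Adj a b →
      wdist G (fun a b => (w a b : ℕ∞)) a b ≤ virtualWeight G w VA VB a b := by
  intro a b hab
  rw [virtualA, SimpleGraph.fromRel_adj] at hab
  obtain ⟨hne, hr⟩ := hab
  by_cases hc : a ∈ cutB G VA VB ∧ b ∈ cutB G VA VB
  · rw [virtualWeight_of_mem hc]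
    exact wdist_anti (inducedOn_le G VB) _ a b
  · rw [virtualWeight_of_not hc]
    have hadj : G.Adj a b := by
      rcases hr with (⟨h, _⟩ | ⟨h, _⟩ | ⟨h1, h2⟩) | (⟨h, _⟩ | ⟨h, _⟩ | ⟨h1, h2⟩)
      · exact h
      · exact h
      · exact absurd ⟨h1, h2⟩ hc
      · exact h.symm
      · exact h.symm
      · exact absurd ⟨h2, h1⟩ hc
    exact wdist_le_weight hadj


lemma key (G : SimpleGraph V) (w : V → V → ℕ) (VA VB : Set V)
    (hdisj : Disjoint VA VB) (hunion : VA ∪ VB = Set.univ)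
    (v : V) (hv : v ∈ VB \ cutB G VA VB) :
    ∀ n (u : V) (p : G.Walk u v), p.length ≤ n →
      ((u ∈ VA ∪ cutB G VA VB → ∃ x ∈ cutB G VA VB,
          dv G w VA VB u x + dB G w VB x v ≤ wlen (fun a b => (w a b : ℕ∞)) p) ∧
       (u ∈ VB →
          dB G w VB u v ≤ wlen (fun a b => (w a b : ℕ∞)) p ∨
          ∃ z ∈ cutB G VA VB, ∃ x ∈ cutB G VA VB,
            dB G w VB u z + dv G w VA VB z x + dB G w VB x v ≤
              wlen (fun a b => (w a b : ℕ∞)) p)) := by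
  intro n
  induction n with
  | zero =>
    intro u p hlen
    cases p with
    | nil =>
      refine ⟨fun hu => ?_, fun _ => Or.inl (by simp [dB])⟩
      rcases hu with hu | hu
      · exact absurd hv.1 (Set.disjoint_left.mp hdisj hu)
      · exact absurd hu hv.2
    | cons hadj q => simp at hlen
  | succ n ih =>
    intro u p hlen
    cases p with
    | nil =>
      refine ⟨fun hu => ?_, fun _ => Or.inl (by simp [dB])⟩
      rcases hu with hu | hu
      · exact absurd hv.1 (Set.disjoint_left.mp hdisj hu)
      · exact absurd hu hv.2
    | cons hadj q =>
      rename_i y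
      have hlq : q.length ≤ n := by
        simpa [SimpleGraph.Walk.length_cons] using hlen
      have IH := ih y q hlq
      have hy2 : y ∈ VA ∨ y ∈ VB := by
        have h0 : y ∈ VA ∪ VB := by rw [hunion]; trivial
        exact h0
      have hne_w : ∀ a : V, a ∈ VA → a ∉ cutB G VA VB := fun a ha hc =>
        Set.disjoint_left.mp hdisj ha hc.1
      constructor
      · intro hu
        rcases hu with huA | huCB
        · -- u ∈ VA
          have hy' : y ∈ VA ∪ cutB G VA VB := by
            rcases hy2 with h1 | h1
            · exact Or.inl h1
            · exact Or.inr ⟨h1, u, huA, hadj⟩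
          obtain ⟨x, hx, hle⟩ := IH.1 hy'
          refine ⟨x, hx, ?_⟩
          have hadj' : (virtualA G VA VB).Adj u y := by
            refine adj_virtualA ?_ hadj.ne
            rcases hy' with h1 | h1
            · exact Or.inl ⟨hadj, huA, h1⟩
            · exact Or.inr (Or.inl ⟨hadj, huA, h1⟩)
          have hstep : dv G w VA VB u x ≤ (w u y : ℕ∞) + dv G w VA VB y x := by
            have h3 := wdist_le_add_left (virtualWeight G w VA VB) (v := x) hadj'
            rwa [virtualWeight_of_not (fun hc => hne_w u huA hc.1)] at h3
          calc dv G w VA VB u x + dB G w VB x v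
              ≤ ((w u y : ℕ∞) + dv G w VA VB y x) + dB G w VB x v := add_le_add hstep le_rfl
            _ = (w u y : ℕ∞) + (dv G w VA VB y x + dB G w VB x v) := add_assoc _ _ _
            _ ≤ (w u y : ℕ∞) + wlen (fun a b => (w a b : ℕ∞)) q := add_le_add le_rfl hle
            _ = wlen (fun a b => (w a b : ℕ∞)) (SimpleGraph.Walk.cons hadj q) :=
                (wlen_cons (fun a b => ((w a b : ℕ∞))) hadj q).symm
        · -- u ∈ cutB
          rcases hy2 with hyA | hyB
          · -- y ∈ VA
            obtain ⟨x, hx, hle⟩ := IH.1 (Or.inl hyA)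
            refine ⟨x, hx, ?_⟩
            have hadj' : (virtualA G VA VB).Adj u y :=
              (adj_virtualA (Or.inr (Or.inl ⟨hadj.symm, hyA, huCB⟩)) hadj.ne.symm).symm
            have hstep : dv G w VA VB u x ≤ (w u y : ℕ∞) + dv G w VA VB y x := by
              have h3 := wdist_le_add_left (virtualWeight G w VA VB) (v := x) hadj'
              rwa [virtualWeight_of_not (fun hc => hne_w y hyA hc.2)] at h3
            calc dv G w VA VB u x + dB G w VB x v
                ≤ ((w u y : ℕ∞) + dv G w VA VB y x) + dB G w VB x v := add_le_add hstep le_rfl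
              _ = (w u y : ℕ∞) + (dv G w VA VB y x + dB G w VB x v) := add_assoc _ _ _
              _ ≤ (w u y : ℕ∞) + wlen (fun a b => (w a b : ℕ∞)) q := add_le_add le_rfl hle
              _ = wlen (fun a b => (w a b : ℕ∞)) (SimpleGraph.Walk.cons hadj q) :=
                  (wlen_cons (fun a b => ((w a b : ℕ∞))) hadj q).symm
          · -- y ∈ VB
            have hadjB : (inducedOn G VB).Adj u y := adj_inducedOn hadj huCB.1 hyB
            rcases IH.2 hyB with hle | ⟨z, hz, x, hx, hle⟩
            · refine ⟨u, huCB, ?_⟩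
              calc dv G w VA VB u u + dB G w VB u v
                  = dB G w VB u v := by simp [dv]
                _ ≤ (w u y : ℕ∞) + dB G w VB y v := wdist_le_add_left _ hadjB
                _ ≤ (w u y : ℕ∞) + wlen (fun a b => (w a b : ℕ∞)) q := add_le_add le_rfl hle
                _ = wlen (fun a b => (w a b : ℕ∞)) (SimpleGraph.Walk.cons hadj q) :=
                    (wlen_cons (fun a b => ((w a b : ℕ∞))) hadj q).symm
            · refine ⟨x, hx, ?_⟩
              have h1 : dB G w VB u z ≤ (w u y : ℕ∞) + dB G w VB y z :=
                wdist_le_add_left _ hadjB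
              have h2 : dv G w VA VB u x ≤ dB G w VB u z + dv G w VA VB z x :=
                le_trans (wdist_triangle _ u z x) (add_le_add (dv_le_dB huCB hz) le_rfl)
              calc dv G w VA VB u x + dB G w VB x v
                  ≤ (dB G w VB u z + dv G w VA VB z x) + dB G w VB x v := add_le_add h2 le_rfl
                _ ≤ (((w u y : ℕ∞) + dB G w VB y z) + dv G w VA VB z x) + dB G w VB x v :=
                    add_le_add (add_le_add h1 le_rfl) le_rfl
                _ = (w u y : ℕ∞) + (dB G w VB y z + dv G w VA VB z x + dB G w VB x v) := by
                    ring
                _ ≤ (w u y : ℕ∞) + wlen (fun a b => (w a b : ℕ∞)) q := add_le_add le_rfl hle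
                _ = wlen (fun a b => (w a b : ℕ∞)) (SimpleGraph.Walk.cons hadj q) :=
                    (wlen_cons (fun a b => ((w a b : ℕ∞))) hadj q).symm
      · intro huB
        rcases hy2 with hyA | hyB
        · -- y ∈ VA, hence u ∈ cutB
          have huCB : u ∈ cutB G VA VB := ⟨huB, y, hyA, hadj.symm⟩
          obtain ⟨x, hx, hle⟩ := IH.1 (Or.inl hyA)
          refine Or.inr ⟨u, huCB, x, hx, ?_⟩
          have hadj' : (virtualA G VA VB).Adj u y :=
            (adj_virtualA (Or.inr (Or.inl ⟨hadj.symm, hyA, huCB⟩)) hadj.ne.symm).symm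
          have hstep : dv G w VA VB u x ≤ (w u y : ℕ∞) + dv G w VA VB y x := by
            have h3 := wdist_le_add_left (virtualWeight G w VA VB) (v := x) hadj'
            rwa [virtualWeight_of_not (fun hc => hne_w y hyA hc.2)] at h3
          calc dB G w VB u u + dv G w VA VB u x + dB G w VB x v
              = dv G w VA VB u x + dB G w VB x v := by simp [dB]
            _ ≤ ((w u y : ℕ∞) + dv G w VA VB y x) + dB G w VB x v := add_le_add hstep le_rfl
            _ = (w u y : ℕ∞) + (dv G w VA VB y x + dB G w VB x v) := add_assoc _ _ _
            _ ≤ (w u y : ℕ∞) + wlen (fun a b => (w a b : ℕ∞)) q := add_le_add le_rfl hle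
            _ = wlen (fun a b => (w a b : ℕ∞)) (SimpleGraph.Walk.cons hadj q) :=
                (wlen_cons (fun a b => ((w a b : ℕ∞))) hadj q).symm
        · -- y ∈ VB
          have hadjB : (inducedOn G VB).Adj u y := adj_inducedOn hadj huB hyB
          rcases IH.2 hyB with hle | ⟨z, hz, x, hx, hle⟩
          · refine Or.inl ?_
            calc dB G w VB u v
                ≤ (w u y : ℕ∞) + dB G w VB y v := wdist_le_add_left _ hadjB
              _ ≤ (w u y : ℕ∞) + wlen (fun a b => (w a b : ℕ∞)) q := add_le_add le_rfl hle
              _ = wlen (fun a b => (w a b : ℕ∞)) (SimpleGraph.Walk.cons hadj q) :=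
                  (wlen_cons (fun a b => ((w a b : ℕ∞))) hadj q).symm
          · refine Or.inr ⟨z, hz, x, hx, ?_⟩
            have h1 : dB G w VB u z ≤ (w u y : ℕ∞) + dB G w VB y z :=
              wdist_le_add_left _ hadjB
            calc dB G w VB u z + dv G w VA VB z x + dB G w VB x v
                ≤ ((w u y : ℕ∞) + dB G w VB y z) + dv G w VA VB z x + dB G w VB x v :=
                  add_le_add (add_le_add h1 le_rfl) le_rfl
              _ = (w u y : ℕ∞) + (dB G w VB y z + dv G w VA VB z x + dB G w VB x v) := by
                  ring
              _ ≤ (w u y : ℕ∞) + wlen (fun a b => (w a b : ℕ∞)) q := add_le_add le_rfl hle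
              _ = wlen (fun a b => (w a b : ℕ∞)) (SimpleGraph.Walk.cons hadj q) :=
                  (wlen_cons (fun a b => ((w a b : ℕ∞))) hadj q).symm

end WdistAux

/-- for a finite weighted graph `G` whose vertices are partitioned
into `V_A ∪ V_B`, for every node `u ∈ V_A ∪ C_B` and every node `v ∈ V_B \ C_B`,
the weighted distance in `G` satisfies
`wdist_G(u, v) = min_{x ∈ C_B} (wdist_{G'_A}(u, x) + wdist_{G_B}(x, v))`
(the minimum over an empty set being `∞`). -/
theorem wdist_eq_min_over_cutB {V : Type*} [Fintype V]
    (G : SimpleGraph V) (w : V → V → ℕ) (hw : ∀ u v, w u v = w v u)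
    (VA VB : Set V) (hdisj : Disjoint VA VB) (hunion : VA ∪ VB = Set.univ)
    (u v : V) (hu : u ∈ VA ∪ cutB G VA VB) (hv : v ∈ VB \ cutB G VA VB) :
    wdist G (fun a b => (w a b : ℕ∞)) u v =
      ⨅ x ∈ cutB G VA VB,
        wdist (virtualA G VA VB) (virtualWeight G w VA VB) u x +
          wdist (inducedOn G VB) (fun a b => (w a b : ℕ∞)) x v := by
  refine le_antisymm ?_ ?_
  · refine le_iInf₂ fun x hx => ?_
    calc wdist G (fun a b => (w a b : ℕ∞)) u v
        ≤ wdist G (fun a b => (w a b : ℕ∞)) u x + wdist G (fun a b => (w a b : ℕ∞)) x v :=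
          WdistAux.wdist_triangle _ u x v
      _ ≤ wdist (virtualA G VA VB) (virtualWeight G w VA VB) u x +
            wdist (inducedOn G VB) (fun a b => (w a b : ℕ∞)) x v :=
          add_le_add
            (WdistAux.wdist_le_wdist_of_edge_bound WdistAux.wdist_le_virtualWeight u x)
            (WdistAux.wdist_anti (WdistAux.inducedOn_le G VB) _ x v)
  · show _ ≤ ⨅ p : G.Walk u v, WdistAux.wlen (fun a b => (w a b : ℕ∞)) p
    refine le_iInf fun p => ?_
    obtain ⟨x, hx, hle⟩ := (WdistAux.key G w VA VB hdisj hunion v hv p.length u p le_rfl).1 hu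
    exact le_trans (iInf₂_le x hx) hle
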